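/- arXiv:1507.07395 — 3 statements merged into one kernel-verified Lean document; each statement's English description precedes it below -/
import Mathlib

section
/- Let X = (X_1, …, X_k) be a tuple of n×n complex matrices, viewed as a matrix in M_{n×nk}(ℂ). Then the product of determinants satisfies |det(X_1) ⋯ det(X_k)| ≤ ‖X‖^{nk} / (nk)^{nk/2}, where ‖X‖² = Σᵢ ‖Xᵢ‖² is the total Frobenius norm. -/
open Finset Matrix

lemma trace_eq_sum_eig (m : ℕ) (A : Matrix (Fin m) (Fin m) ℂ) (hA : A.IsHermitian) :
    A.trace = ∑ i, (hA.eigenvalues i : ℂ) := by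
  conv_lhs => rw [hA.spectral_theorem]
  rw [Unitary.conjStarAlgAut_apply, Matrix.trace_mul_cycle]
  have h : (star (hA.eigenvectorUnitary : Matrix (Fin m) (Fin m) ℂ)) *
      (hA.eigenvectorUnitary : Matrix (Fin m) (Fin m) ℂ) = 1 :=
    (Matrix.mem_unitaryGroup_iff').mp hA.eigenvectorUnitary.2
  rw [h, one_mul, Matrix.trace_diagonal]
  simp

lemma frob_eq (n : ℕ) (A : Matrix (Fin n) (Fin n) ℂ) :
    (Aᴴ * A).trace = ((∑ a, ∑ b, ‖A a b‖ ^ 2 : ℝ) : ℂ) := by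
  rw [Finset.sum_comm]
  push_cast
  simp only [Matrix.trace, Matrix.diag, Matrix.mul_apply, Matrix.conjTranspose_apply,
    Complex.star_def]
  simp [← Complex.normSq_eq_conj_mul_self, ← Complex.sq_norm, Complex.ofReal_pow]

/-- For a multiblock matrix `X = (X_1, …, X_k)` of `n × n` complex blocks, the product of the
block determinants satisfies `|det X_1 ⋯ det X_k| ≤ ‖X‖^{nk} / (nk)^{nk/2}`, where
`‖X‖² = ∑ i ‖X i‖²` is the total Frobenius norm. -/
theorem abs_prod_det_le_frobenius_pow_div (n k : ℕ)
    (X : Fin k → Matrix (Fin n) (Fin n) ℂ) :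
    ‖∏ i, (X i).det‖ ≤
      (Real.sqrt (∑ i, ∑ a, ∑ b, ‖X i a b‖ ^ 2)) ^ (n * k) /
        ((n * k : ℕ) : ℝ) ^ (((n * k : ℕ) : ℝ) / 2) := by
  set S : ℝ := ∑ i, ∑ a, ∑ b, ‖X i a b‖ ^ 2 with hSdef
  have hS0 : 0 ≤ S := by positivity
  rcases Nat.eq_zero_or_pos (n * k) with hN | hN
  · have h1 : ‖∏ i, (X i).det‖ = 1 := by
      rcases Nat.mul_eq_zero.mp hN with h | h
      · subst h
        simp [Matrix.det_fin_zero]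
      · subst h
        simp
    rw [h1, hN]
    norm_num
  -- main case
  set lam : Fin k → Fin n → ℝ :=
    fun i j => (Matrix.isHermitian_conjTranspose_mul_self (X i)).eigenvalues j with hlamdef
  have hlam0 : ∀ i j, 0 ≤ lam i j := fun i j =>
    Matrix.eigenvalues_conjTranspose_mul_self_nonneg (X i) j
  -- sum of eigenvalues equals S
  have hsum : S = ∑ i, ∑ j, lam i j := by
    have h : ∀ i : Fin k, (∑ a, ∑ b, ‖X i a b‖ ^ 2) = ∑ j, lam i j := by
      intro i
      have h1 := frob_eq n (X i)
      have h2 := trace_eq_sum_eig n ((X i)ᴴ * X i)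
        (Matrix.isHermitian_conjTranspose_mul_self (X i))
      rw [h1] at h2
      have h3 : ((∑ a, ∑ b, ‖X i a b‖ ^ 2 : ℝ) : ℂ)
          = ((∑ j, lam i j : ℝ) : ℂ) := by rw [h2]; push_cast; rfl
      exact_mod_cast h3
    rw [hSdef]
    exact Finset.sum_congr rfl fun i _ => h i
  -- product of eigenvalues equals squared abs of det
  have habs : ∀ i : Fin k, ‖(X i).det‖ ^ 2 = ∏ j, lam i j := by
    intro i
    have h1 : ((X i)ᴴ * X i).det = ∏ j, (lam i j : ℂ) :=
      (Matrix.isHermitian_conjTranspose_mul_self (X i)).det_eq_prod_eigenvalues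
    have h2 : ((X i)ᴴ * X i).det = ((‖(X i).det‖ ^ 2 : ℝ) : ℂ) := by
      rw [Matrix.det_mul, Matrix.det_conjTranspose, Complex.star_def,
        ← Complex.normSq_eq_conj_mul_self]
      norm_cast
      rw [Complex.sq_norm]
    rw [h2] at h1
    have h3 : ((‖(X i).det‖ ^ 2 : ℝ) : ℂ) = ((∏ j, lam i j : ℝ) : ℂ) := by
      rw [h1]; push_cast; rfl
    exact_mod_cast h3
  have hprod : ‖∏ i, (X i).det‖ ^ 2 = ∏ i, ∏ j, lam i j := by
    rw [norm_prod, ← Finset.prod_pow]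
    exact Finset.prod_congr rfl fun i _ => habs i
  set P : ℝ := ∏ i, ∏ j, lam i j with hPdef
  have hP0 : 0 ≤ P := Finset.prod_nonneg fun i _ => Finset.prod_nonneg fun j _ => hlam0 i j
  set N : ℕ := n * k with hNdef
  have hNR : (0:ℝ) < (N : ℝ) := by exact_mod_cast hN
  -- AM-GM
  have hAMGM : P ^ ((N : ℝ))⁻¹ ≤ S / N := by
    have key := Real.geom_mean_le_arith_mean_weighted (Finset.univ : Finset (Fin k × Fin n))
      (fun _ => ((N : ℝ))⁻¹) (fun p => lam p.1 p.2)
      (fun _ _ => by positivity)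
      (by
        simp only [Finset.sum_const, Finset.card_univ, Fintype.card_prod, Fintype.card_fin,
          nsmul_eq_mul]
        rw [show ((k * n : ℕ) : ℝ) = (N : ℝ) by rw [hNdef]; push_cast; ring]
        field_simp)
      (fun p _ => hlam0 p.1 p.2)
    have hL : (∏ p : Fin k × Fin n, lam p.1 p.2 ^ ((N:ℝ))⁻¹) = P ^ ((N:ℝ))⁻¹ := by
      rw [Real.finset_prod_rpow Finset.univ (fun p : Fin k × Fin n => lam p.1 p.2)
        (fun p _ => hlam0 p.1 p.2) ((N:ℝ))⁻¹, hPdef]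
      congr 1
      exact Fintype.prod_prod_type _
    have hR : (∑ p : Fin k × Fin n, ((N:ℝ))⁻¹ * lam p.1 p.2) = S / N := by
      rw [← Finset.mul_sum, hsum, div_eq_inv_mul]
      congr 1
      exact Fintype.sum_prod_type _
    rw [hL, hR] at key
    exact key
  -- conclude
  have hPle : P ≤ (S / N) ^ ((N : ℝ)) := by
    have h := Real.rpow_le_rpow (Real.rpow_nonneg hP0 _) hAMGM (le_of_lt hNR)
    rwa [← Real.rpow_mul hP0, inv_mul_cancel₀ (ne_of_gt hNR), Real.rpow_one] at h
  have habs' : ‖∏ i, (X i).det‖ = Real.sqrt P := by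
    rw [← hprod, Real.sqrt_sq (by positivity)]
  rw [habs']
  have e3 : Real.sqrt ((S / (N:ℝ)) ^ ((N : ℝ))) = (Real.sqrt S) ^ N / ((N:ℝ)) ^ (((N:ℕ):ℝ)/2) := by
    rw [Real.sqrt_eq_rpow, Real.sqrt_eq_rpow, ← Real.rpow_natCast (S ^ ((1:ℝ)/2)) N,
      ← Real.rpow_mul (div_nonneg hS0 hNR.le), Real.div_rpow hS0 hNR.le,
      ← Real.rpow_mul hS0]
    rw [show (N:ℝ) * (1/2) = ((N:ℕ):ℝ)/2 by ring, show (1:ℝ)/2 * (N:ℝ) = ((N:ℕ):ℝ)/2 by ring]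
  calc Real.sqrt P ≤ Real.sqrt ((S / (N:ℝ)) ^ ((N : ℝ))) := Real.sqrt_le_sqrt hPle
    _ = _ := e3
end

section
/- Let L be a full-rank lattice in ℝ^d (i.e., the ℤ-span of a basis of ℝ^d) and let S ⊆ ℝ^d be a bounded measurable set. Then there exists a vector x ∈ ℝ^d such that the number of points of the translated lattice L + x lying in S is at least vol(S)/covol(L), where covol(L) is the volume of a fundamental parallelotope of L. -/
open MeasureTheory
open scoped Pointwise

/-- **Shifting lemma.** Let `L` be a full-rank lattice in `ℝ^d` (the ℤ-span of a basis `b` of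
`ℝ^d`) and let `S ⊆ ℝ^d` be a bounded measurable set. Then there exists a translate `x` such
that the number of points of `L + x` lying in `S` is at least `vol(S) / covol(L)`, where
`covol(L)` is the absolute value of the determinant of a matrix whose rows are the basis
vectors of `L`. -/
theorem exists_translate_card_ge (d : ℕ) (b : Module.Basis (Fin d) ℝ (Fin d → ℝ))
    (S : Set (Fin d → ℝ)) (hbdd : Bornology.IsBounded S) (hmeas : MeasurableSet S) :
    ∃ x : Fin d → ℝ,
      (volume S).toReal / |(Matrix.of fun i j => b i j).det| ≤
        (Set.ncard {p : Fin d → ℝ | p ∈ S ∧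
          ∃ l ∈ Submodule.span ℤ (Set.range b), p = l + x} : ℝ) := by
  classical
  set L := Submodule.span ℤ (Set.range b) with hLdef
  set F := ZSpan.fundamentalDomain b with hFdef
  by_contra hcon
  push_neg at hcon
  set c := (volume S).toReal / |(Matrix.of fun i j => b i j).det| with hc
  -- basic facts about the fundamental domain
  have hFvol : volume F = ENNReal.ofReal |(Matrix.of fun i j => b i j).det| :=
    ZSpan.volume_fundamentalDomain b
  have hFne : volume F ≠ 0 := ZSpan.measure_fundamentalDomain_ne_zero b
  have hdetpos : 0 < |(Matrix.of fun i j => b i j).det| := by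
    by_contra h
    push_neg at h
    exact hFne (by rw [hFvol, ENNReal.ofReal_eq_zero]; exact h)
  have hcpos : 0 < c := lt_of_le_of_lt (Nat.cast_nonneg _) (hcon 0)
  set n : ℕ := ⌈c⌉₊ - 1 with hn
  have hceil : 1 ≤ ⌈c⌉₊ := Nat.one_le_ceil_iff.mpr hcpos
  have hnlt : (n : ℝ) < c := by
    have : (⌈c⌉₊ - 1 : ℕ) < ⌈c⌉₊ := Nat.sub_lt (lt_of_lt_of_le one_pos hceil) one_pos
    exact_mod_cast (Nat.lt_ceil).mp this
  -- the counting sets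
  set T : (Fin d → ℝ) → Set L.toAddSubgroup :=
    fun x => {l : L.toAddSubgroup | (l : Fin d → ℝ) + x ∈ S} with hT
  have hpre : ∀ l : Fin d → ℝ, MeasurableSet ((fun y : Fin d → ℝ => l + y) ⁻¹' S) :=
    fun l => hmeas.preimage (measurable_const_add l)
  have hfin : ∀ x, (T x).Finite := by
    intro x
    have h1 : ((fun l : L.toAddSubgroup => (l : Fin d → ℝ)) '' T x).Finite := by
      have hsub : ((fun l : L.toAddSubgroup => (l : Fin d → ℝ)) '' T x) ⊆
          ((fun y : Fin d → ℝ => y + x) ⁻¹' S) ∩ (L : Set (Fin d → ℝ)) := by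
        rintro p ⟨l, hl, rfl⟩
        exact ⟨hl, (Submodule.mem_toAddSubgroup L).mp l.2⟩
      have hbdd' : Bornology.IsBounded ((fun y : Fin d → ℝ => y + x) ⁻¹' S) := by
        have heq : ((fun y : Fin d → ℝ => y + x) ⁻¹' S)
            = ({-x} : Set (Fin d → ℝ)) + S := by
          ext p
          simp only [Set.mem_preimage, Set.singleton_add, Set.mem_image]
          constructor
          · intro h
            exact ⟨p + x, h, by abel⟩
          · rintro ⟨q, hq, rfl⟩
            simpa [add_assoc] using hq
        rw [heq]
        exact (Bornology.isBounded_singleton).add hbdd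
      have : DiscreteTopology (L : Set (Fin d → ℝ)) :=
        (inferInstance : DiscreteTopology L)
      refine Set.Finite.subset
        (Metric.finite_isBounded_inter_isClosed DiscreteTopology.isDiscrete hbdd' ?_) hsub
      exact AddSubgroup.isClosed_of_discrete (H := L.toAddSubgroup)
    exact h1.of_finite_image (Subtype.coe_injective.injOn)
  -- count in terms of T
  have hcard : ∀ x : Fin d → ℝ,
      {p : Fin d → ℝ | p ∈ S ∧ ∃ l ∈ L, p = l + x}.ncard = (T x).ncard := by
    intro x
    have himg : (fun l : L.toAddSubgroup => (l : Fin d → ℝ) + x) '' T x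
        = {p : Fin d → ℝ | p ∈ S ∧ ∃ l ∈ L, p = l + x} := by
      ext p
      constructor
      · rintro ⟨l, hl, rfl⟩
        exact ⟨hl, l, (Submodule.mem_toAddSubgroup L).mp l.2, rfl⟩
      · rintro ⟨hp, l, hl, rfl⟩
        exact ⟨⟨l, (Submodule.mem_toAddSubgroup L).mpr hl⟩, hp, rfl⟩
    rw [← himg]
    exact Set.ncard_image_of_injective _
      (fun a a' h => Subtype.coe_injective (by simpa using h))
  -- hence every counting set has at most n elements
  have hTle : ∀ x : Fin d → ℝ, (T x).encard ≤ (n : ℕ∞) := by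
    intro x
    have h1 : (T x).ncard ≤ n := by
      have h2 : ((T x).ncard : ℝ) < c := by rw [← hcard x]; exact hcon x
      have h3 : (T x).ncard < ⌈c⌉₊ := Nat.lt_ceil.mpr h2
      omega
    rw [← (hfin x).cast_ncard_eq]
    exact_mod_cast h1
  -- the indicator functions
  set f : L.toAddSubgroup → (Fin d → ℝ) → ENNReal :=
    fun l => Set.indicator ((fun y : Fin d → ℝ => (l : Fin d → ℝ) + y) ⁻¹' S) 1 with hf
  have hfmeas : ∀ l : L.toAddSubgroup, Measurable (f l) := by
    intro l
    exact (measurable_indicator_const_iff 1).mpr (hpre l)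
  -- pointwise sum of indicators equals the cardinality of T x
  have hsum : ∀ x : Fin d → ℝ, (∑' l : L.toAddSubgroup, f l x) ≤ (n : ENNReal) := by
    intro x
    have heq : (∑' l : L.toAddSubgroup, f l x) = (T x).encard := by
      have h1 : ∀ l : L.toAddSubgroup, f l x = Set.indicator (T x) (fun _ => (1 : ENNReal)) l := by
        intro l
        by_cases h : (l : Fin d → ℝ) + x ∈ S <;> simp [hf, hT, Set.indicator, h]
      simp_rw [h1]
      rw [← tsum_subtype (T x) (fun _ => (1 : ENNReal))]
      exact ENNReal.tsum_set_one (T x)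
    rw [heq]
    calc ((T x).encard : ENNReal) ≤ ((n : ℕ∞) : ENNReal) := by
          exact_mod_cast ENat.toENNReal_le.mpr (hTle x)
      _ = (n : ENNReal) := by simp
  -- the fundamental domain decomposition
  have hfund : IsAddFundamentalDomain L.toAddSubgroup F volume :=
    ZSpan.isAddFundamentalDomain' b volume
  haveI : Countable L.toAddSubgroup := (inferInstance : Countable L)
  have hS1 : volume S = ∑' l : L.toAddSubgroup, volume ((l +ᵥ S) ∩ F) :=
    hfund.measure_eq_tsum S
  have hS2 : ∀ l : L.toAddSubgroup, volume ((l +ᵥ S) ∩ F)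
      = volume (((fun y : Fin d → ℝ =>
        ((-l : L.toAddSubgroup) : Fin d → ℝ) + y) ⁻¹' S) ∩ F) := by
    intro l
    congr 1
    ext p
    simp only [Set.mem_inter_iff, Set.mem_preimage, Set.mem_vadd_set,
      AddSubgroup.vadd_def, vadd_eq_add, AddSubgroup.coe_neg]
    constructor
    · rintro ⟨⟨q, hq, rfl⟩, h2⟩
      exact ⟨by simpa [neg_add_cancel_left] using hq, h2⟩
    · rintro ⟨h1, h2⟩
      exact ⟨⟨-(l : Fin d → ℝ) + p, h1, by abel⟩, h2⟩
  have hS3 : volume S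
      = ∑' l : L.toAddSubgroup,
        volume (((fun y : Fin d → ℝ => (l : Fin d → ℝ) + y) ⁻¹' S) ∩ F) := by
    rw [hS1]
    simp_rw [hS2]
    exact (Equiv.neg L.toAddSubgroup).tsum_eq (fun l : L.toAddSubgroup =>
      volume (((fun y : Fin d → ℝ => (l : Fin d → ℝ) + y) ⁻¹' S) ∩ F))
  -- convert to an integral and bound
  have hS4 : volume S ≤ (n : ENNReal) * volume F := by
    rw [hS3]
    have h1 : ∀ l : L.toAddSubgroup, volume (((fun y : Fin d → ℝ => (l : Fin d → ℝ) + y) ⁻¹' S) ∩ F)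
        = ∫⁻ x, f l x ∂(volume.restrict F) := by
      intro l
      rw [hf]
      rw [lintegral_indicator (hpre _)]
      simp [Measure.restrict_restrict (hpre _), Set.inter_comm]
    simp_rw [h1]
    rw [← lintegral_tsum (fun l => (hfmeas l).aemeasurable)]
    calc ∫⁻ x, ∑' l : L.toAddSubgroup, f l x ∂(volume.restrict F)
        ≤ ∫⁻ _, (n : ENNReal) ∂(volume.restrict F) := lintegral_mono hsum
      _ = (n : ENNReal) * volume F := by simp [mul_comm]
  -- derive the contradiction
  have h5 : (volume S).toReal ≤ (n : ℝ) * |(Matrix.of fun i j => b i j).det| := by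
    have := ENNReal.toReal_mono (by
      rw [hFvol]
      exact ENNReal.mul_ne_top (by simp) ENNReal.ofReal_ne_top) hS4
    rw [hFvol, ENNReal.toReal_mul, ENNReal.toReal_ofReal hdetpos.le] at this
    simpa using this
  have h6 : (volume S).toReal = c * |(Matrix.of fun i j => b i j).det| := by
    rw [hc, div_mul_cancel₀ _ hdetpos.ne']
  rw [h6] at h5
  have h7 : (n : ℝ) * |(Matrix.of fun i j => b i j).det|
      < c * |(Matrix.of fun i j => b i j).det| :=
    mul_lt_mul_of_pos_right hnlt hdetpos
  linarith
end

section
/- Let L ⊂ M_{n×nk}(ℂ) be a lattice of full rank 2n²k with det_min(L) > 0 (nonvanishing determinant). Then the reduced Hermite invariant of L with respect to the group G = {H = (H_1,…,H_k), each H_i ∈ GL_n(ℂ), with ∏ᵢ det(H_i) = 1} satisfies rh_G(L) = nk · δ(L)^{2/(nk)}, where δ(L) is the normalized minimum determinant. Moreover, if some nonzero X ∈ L has ∏ᵢ det(X_i) = 0, then rh_G(L) = 0 = nk · δ(L)^{2/(nk)}. -/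
open Matrix

/-- The absolute value of the product of the block determinants of a multiblock matrix. -/
noncomputable def pdetAbs {n k : ℕ} (X : Fin k → Matrix (Fin n) (Fin n) ℂ) : ℝ :=
  ‖∏ i, (X i).det‖

/-- Squared Frobenius norm of a multiblock matrix. -/
noncomputable def frobSq {n k : ℕ} (X : Fin k → Matrix (Fin n) (Fin n) ℂ) : ℝ :=
  ∑ i, ∑ a, ∑ b, ‖X i a b‖ ^ 2

/-- The real inner product `⟨X, Y⟩ = Re (Tr (X Yᴴ))` on multiblock matrices. -/
noncomputable def mbInner {n k : ℕ} (X Y : Fin k → Matrix (Fin n) (Fin n) ℂ) : ℝ :=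
  (∑ i, ((X i) * (Y i)ᴴ).trace).re

/-- The volume of the fundamental parallelotope of the lattice spanned by `B`. -/
noncomputable def latticeVol {n k m : ℕ} (B : Fin m → (Fin k → Matrix (Fin n) (Fin n) ℂ)) : ℝ :=
  Real.sqrt |(Matrix.of fun i j => mbInner (B i) (B j)).det|

/-- The minimum determinant of the lattice spanned by `B`. -/
noncomputable def detMin {n k m : ℕ} (B : Fin m → (Fin k → Matrix (Fin n) (Fin n) ℂ)) : ℝ :=
  sInf {r : ℝ | ∃ X ∈ Submodule.span ℤ (Set.range B), X ≠ 0 ∧ r = pdetAbs X}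

/-- The normalized minimum determinant of a full-rank lattice (rank `2n²k`):
`δ(L) = det_min(L) / Vol(L)^{1/(2n)}`. -/
noncomputable def normMinDet {n k : ℕ}
    (B : Fin (2 * n ^ 2 * k) → (Fin k → Matrix (Fin n) (Fin n) ℂ)) : ℝ :=
  detMin B / (latticeVol B) ^ ((1 : ℝ) / (2 * n))

/-- The reduced Hermite invariant of the lattice spanned by `B` with respect to the group
`G = {H = (H_1,…,H_k) : H_i ∈ GL_n(ℂ), ∏ det (H_i) = 1}`: the infimum over `H ∈ G` of the
Hermite invariant of the faded lattice `HL` (whose volume equals that of `L` since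
`pdet H = 1`). -/
noncomputable def reducedHermite {n k : ℕ}
    (B : Fin (2 * n ^ 2 * k) → (Fin k → Matrix (Fin n) (Fin n) ℂ)) : ℝ :=
  sInf {r : ℝ | ∃ H : Fin k → Matrix (Fin n) (Fin n) ℂ,
    (∀ i, IsUnit (H i)) ∧ (∏ i, (H i).det) = 1 ∧
    r = sInf {y : ℝ | ∃ X ∈ Submodule.span ℤ (Set.range B), X ≠ 0 ∧
      y = frobSq (fun i => H i * X i) / (latticeVol B) ^ ((1 : ℝ) / (n ^ 2 * k))}}

section Helpers
open scoped ComplexOrder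

private lemma trace_self_mul_conjT {n : ℕ} (M : Matrix (Fin n) (Fin n) ℂ) :
    (M * Mᴴ).trace = ((∑ a, ∑ b, ‖M a b‖ ^ 2 : ℝ) : ℂ) := by
  simp only [Matrix.trace, Matrix.diag, Matrix.mul_apply, Matrix.conjTranspose_apply,
    Complex.star_def, Complex.mul_conj]
  push_cast
  congr 1
  ext a
  congr 1
  ext b
  rw [← Complex.sq_norm]
  norm_cast

private lemma det_bound {n : ℕ} (M : Matrix (Fin n) (Fin n) ℂ) (hn : 0 < n) :
    (n : ℝ) * ‖M.det‖ ^ ((2 : ℝ) / n) ≤ ∑ a, ∑ b, ‖M a b‖ ^ 2 := by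
  classical
  have hA : (M * Mᴴ).PosSemidef := Matrix.posSemidef_self_mul_conjTranspose M
  have hH : (M * Mᴴ).IsHermitian := hA.1
  have hev : ∀ i, 0 ≤ hH.eigenvalues i := hA.eigenvalues_nonneg
  -- product of eigenvalues
  have hprod : ‖M.det‖ ^ 2 = ∏ i, hH.eigenvalues i := by
    have h1 : (M * Mᴴ).det = ((‖M.det‖ ^ 2 : ℝ) : ℂ) := by
      rw [Matrix.det_mul, Matrix.det_conjTranspose, Complex.star_def, Complex.mul_conj]
      norm_cast
      rw [Complex.sq_norm]
    have h2 := hH.det_eq_prod_eigenvalues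
    rw [h1] at h2
    have : ((‖M.det‖ ^ 2 : ℝ) : ℂ) = ((∏ i, hH.eigenvalues i : ℝ) : ℂ) := by
      rw [h2]; push_cast; rfl
    exact_mod_cast this
  -- sum of eigenvalues
  have hsum : (∑ a, ∑ b, ‖M a b‖ ^ 2 : ℝ) = ∑ i, hH.eigenvalues i := by
    have h1 : (M * Mᴴ).trace = ((∑ i, hH.eigenvalues i : ℝ) : ℂ) := by
      nth_rewrite 1 [hH.spectral_theorem]
      rw [Unitary.conjStarAlgAut_apply, Matrix.trace_mul_cycle]
      rw [show (star (Matrix.IsHermitian.eigenvectorUnitary hH : Matrix (Fin n) (Fin n) ℂ)) *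
        (Matrix.IsHermitian.eigenvectorUnitary hH : Matrix (Fin n) (Fin n) ℂ) = 1 from
        (Matrix.mem_unitaryGroup_iff').mp (Matrix.IsHermitian.eigenvectorUnitary hH).2]
      rw [one_mul, Matrix.trace_diagonal]
      push_cast; rfl
    rw [trace_self_mul_conjT] at h1
    exact_mod_cast h1
  -- AM-GM
  have amgm := Real.geom_mean_le_arith_mean_weighted Finset.univ (fun _ => 1 / (n : ℝ))
    hH.eigenvalues (fun i _ => by positivity) (by
      simp [Finset.sum_const]
      field_simp) (fun i _ => hev i)
  have hnR : (0 : ℝ) < n := by exact_mod_cast hn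
  have hgm : (∏ i, hH.eigenvalues i) ^ ((1 : ℝ) / n) ≤ (1 / (n : ℝ)) * ∑ i, hH.eigenvalues i := by
    calc (∏ i, hH.eigenvalues i) ^ ((1 : ℝ) / n)
        = ∏ i, hH.eigenvalues i ^ ((1 : ℝ) / n) :=
          (Real.finset_prod_rpow _ _ (fun i _ => hev i) _).symm
      _ ≤ ∑ i : Fin n, (1 / (n : ℝ)) * hH.eigenvalues i := amgm
      _ = (1 / (n : ℝ)) * ∑ i, hH.eigenvalues i := by rw [Finset.mul_sum]
  have habs : ‖M.det‖ ^ ((2 : ℝ) / n) = (∏ i, hH.eigenvalues i) ^ ((1 : ℝ) / n) := by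
    rw [← hprod]
    rw [show ((2 : ℝ) / n) = 2 * (1 / n) by ring]
    rw [Real.rpow_mul (by positivity)]
    norm_num
  rw [hsum, habs]
  calc (n : ℝ) * (∏ i, hH.eigenvalues i) ^ ((1 : ℝ) / n)
      ≤ (n : ℝ) * ((1 / (n : ℝ)) * ∑ i, hH.eigenvalues i) := by
        exact mul_le_mul_of_nonneg_left hgm hnR.le
    _ = ∑ i, hH.eigenvalues i := by field_simp

private lemma frobSq_nonneg {n k : ℕ} (X : Fin k → Matrix (Fin n) (Fin n) ℂ) : 0 ≤ frobSq X := by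
  unfold frobSq; positivity

private lemma pdetAbs_nonneg {n k : ℕ} (X : Fin k → Matrix (Fin n) (Fin n) ℂ) : 0 ≤ pdetAbs X :=
  norm_nonneg _

private lemma frobSq_lower {n k : ℕ} (hn : 0 < n) (hk : 0 < k)
    (X : Fin k → Matrix (Fin n) (Fin n) ℂ) :
    (n : ℝ) * k * pdetAbs X ^ ((2 : ℝ) / (n * k)) ≤ frobSq X := by
  classical
  have hnR : (0 : ℝ) < n := by exact_mod_cast hn
  have hkR : (0 : ℝ) < k := by exact_mod_cast hk
  set d : Fin k → ℝ := fun i => ‖(X i).det‖ with hd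
  have hd0 : ∀ i, 0 ≤ d i := fun i => norm_nonneg _
  have hpd : pdetAbs X = ∏ i, d i := by
    unfold pdetAbs; rw [norm_prod]
  -- blockwise bound
  have hblock : ∀ i, (n : ℝ) * d i ^ ((2 : ℝ) / n) ≤ ∑ a, ∑ b, ‖X i a b‖ ^ 2 :=
    fun i => det_bound (X i) hn
  -- AM-GM over blocks
  have amgm := Real.geom_mean_le_arith_mean_weighted Finset.univ (fun _ => 1 / (k : ℝ))
    (fun i => d i ^ ((2 : ℝ) / n)) (fun i _ => by positivity) (by
      simp [Finset.sum_const]; field_simp) (fun i _ => by positivity)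
  have key : pdetAbs X ^ ((2 : ℝ) / (n * k)) ≤ (1 / (k : ℝ)) * ∑ i, d i ^ ((2 : ℝ) / n) := by
    calc pdetAbs X ^ ((2 : ℝ) / (n * k))
        = ∏ i, d i ^ (((2 : ℝ) / n) * (1 / k)) := by
          rw [hpd, ← Real.finset_prod_rpow _ _ (fun i _ => hd0 i) _]
          congr 1; ext i
          congr 1
          field_simp
      _ = ∏ i, (d i ^ ((2 : ℝ) / n)) ^ ((1 : ℝ) / k) := by
          congr 1; ext i
          rw [Real.rpow_mul (hd0 i)]
      _ = ∏ i, (fun j => d j ^ ((2 : ℝ) / n)) i ^ ((fun _ : Fin k => 1 / (k : ℝ)) i) := rfl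
      _ ≤ ∑ i : Fin k, (1 / (k : ℝ)) * d i ^ ((2 : ℝ) / n) := amgm
      _ = (1 / (k : ℝ)) * ∑ i, d i ^ ((2 : ℝ) / n) := by rw [Finset.mul_sum]
  calc (n : ℝ) * k * pdetAbs X ^ ((2 : ℝ) / (n * k))
      ≤ (n : ℝ) * k * ((1 / (k : ℝ)) * ∑ i, d i ^ ((2 : ℝ) / n)) := by
        exact mul_le_mul_of_nonneg_left key (by positivity)
    _ = ∑ i, (n : ℝ) * d i ^ ((2 : ℝ) / n) := by
        rw [show (n : ℝ) * k * ((1 / (k : ℝ)) * ∑ i, d i ^ ((2 : ℝ) / n))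
            = (n : ℝ) * ∑ i, d i ^ ((2 : ℝ) / n) by field_simp]
        rw [Finset.mul_sum]
    _ ≤ ∑ i, ∑ a, ∑ b, ‖X i a b‖ ^ 2 :=
        Finset.sum_le_sum fun i _ => hblock i
    _ = frobSq X := rfl

private lemma pdetAbs_inv {n k : ℕ} (H X : Fin k → Matrix (Fin n) (Fin n) ℂ)
    (h1 : ∏ i, (H i).det = 1) : pdetAbs (fun i => H i * X i) = pdetAbs X := by
  unfold pdetAbs
  simp only [Matrix.det_mul, Finset.prod_mul_distrib, h1, one_mul]

private lemma frobSq_smul {n k : ℕ} (z : ℂ) (X : Fin k → Matrix (Fin n) (Fin n) ℂ) :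
    frobSq (fun i => z • X i) = ‖z‖ ^ 2 * frobSq X := by
  unfold frobSq
  simp only [Matrix.smul_apply, smul_eq_mul, norm_mul, mul_pow, Finset.mul_sum]

private lemma frobSq_smul_one {n k : ℕ} (z : ℂ) :
    frobSq (fun _ : Fin k => z • (1 : Matrix (Fin n) (Fin n) ℂ)) = (n : ℝ) * k * ‖z‖ ^ 2 := by
  unfold frobSq
  simp only [Matrix.smul_apply, Matrix.one_apply, smul_eq_mul, mul_ite, mul_one, mul_zero,
    apply_ite (fun x : ℂ => ‖x‖), map_zero, ite_pow]
  simp [Finset.sum_ite_eq', Finset.sum_const]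
  ring

private lemma exists_shrink {n : ℕ} {M : Matrix (Fin n) (Fin n) ℂ} (hM : M.det = 0)
    {s d : ℂ} (hs : s ≠ 0) (hd : d ≠ 0) :
    ∃ A : Matrix (Fin n) (Fin n) ℂ, IsUnit A ∧ A.det = d ∧ A * M = s • M := by
  classical
  obtain ⟨u, hu0, huM⟩ := Matrix.exists_vecMul_eq_zero_iff.mpr hM
  set w : ℂ := u ⬝ᵥ star u with hw
  have hw0 : w ≠ 0 := by
    intro h
    apply hu0
    have : star u ⬝ᵥ u = 0 := by
      rw [← h, dotProduct_comm]
    have := dotProduct_star_self_eq_zero.mp this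
    exact this
  set t : ℂ := (d / s ^ n - 1) / w with ht
  set A := s • (1 + Matrix.replicateCol Unit (t • star u) * Matrix.replicateRow Unit u) with hA
  have hdet : A.det = d := by
    rw [hA, Matrix.det_smul, Matrix.det_one_add_replicateCol_mul_replicateRow]
    rw [dotProduct_smul]
    rw [Fintype.card_fin]
    rw [← hw, smul_eq_mul]
    have htw : t * w = d / s ^ n - 1 := div_mul_cancel₀ _ hw0
    rw [htw]
    have hsn : s ^ n ≠ 0 := pow_ne_zero _ hs
    field_simp
    ring
  refine ⟨A, (Matrix.isUnit_iff_isUnit_det A).mpr (hdet ▸ isUnit_iff_ne_zero.mpr hd), hdet, ?_⟩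
  ·
    have hrow : Matrix.replicateRow Unit u * M = 0 := by
      ext i b
      simp only [Matrix.mul_apply, Matrix.replicateRow_apply, Matrix.zero_apply]
      have := congrFun huM b
      simpa [Matrix.vecMul, dotProduct] using this
    rw [Matrix.smul_mul, add_mul, one_mul, Matrix.mul_assoc, hrow, Matrix.mul_zero, add_zero]

end Helpers

/-- **Reduced Hermite invariant and normalized minimum determinant.** For a full-rank lattice
`L ⊂ M_{n×nk}(ℂ)` of rank `2n²k`: if `det_min(L) > 0` (nonvanishing determinant), then
`rh_G(L) = nk · δ(L)^{2/(nk)}`; moreover, if some nonzero `X ∈ L` has `∏ det (X i) = 0`, then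
`rh_G(L) = 0 = nk · δ(L)^{2/(nk)}`. -/
theorem reducedHermite_eq_normMinDet (n k : ℕ) (hn : 0 < n) (hk : 0 < k)
    (B : Fin (2 * n ^ 2 * k) → (Fin k → Matrix (Fin n) (Fin n) ℂ))
    (hB : LinearIndependent ℝ B) :
    (0 < detMin B →
      reducedHermite B = (n * k : ℝ) * (normMinDet B) ^ ((2 : ℝ) / (n * k))) ∧
    ((∃ X ∈ Submodule.span ℤ (Set.range B), X ≠ 0 ∧ pdetAbs X = 0) →
      reducedHermite B = 0 ∧
        (n * k : ℝ) * (normMinDet B) ^ ((2 : ℝ) / (n * k)) = 0) := by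
  classical
  have hnR : (0 : ℝ) < n := by exact_mod_cast hn
  have hkR : (0 : ℝ) < k := by exact_mod_cast hk
  have hnkR : (0 : ℝ) < (n : ℝ) * k := mul_pos hnR hkR
  have he1 : (1 : ℝ) / ((n : ℝ) ^ 2 * k) ≠ 0 :=
    one_div_ne_zero (ne_of_gt (mul_pos (pow_pos hnR 2) hkR))
  have he2 : (2 : ℝ) / ((n : ℝ) * k) ≠ 0 := div_ne_zero two_ne_zero (ne_of_gt hnkR)
  have he2pos : (0 : ℝ) < (2 : ℝ) / ((n : ℝ) * k) := by positivity
  set S := Submodule.span ℤ (Set.range B) with hSdef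
  have hV0 : (0 : ℝ) ≤ latticeVol B := Real.sqrt_nonneg _
  set c : ℝ := latticeVol B ^ ((1 : ℝ) / (n ^ 2 * k)) with hc
  have hc0 : 0 ≤ c := Real.rpow_nonneg hV0 _
  have hm0 : 0 < 2 * n ^ 2 * k := by positivity
  set X₁ := B ⟨0, hm0⟩ with hX₁
  have hX₁S : X₁ ∈ S := Submodule.subset_span ⟨_, rfl⟩
  have hX₁ne : X₁ ≠ 0 := hB.ne_zero _
  set inS : (Fin k → Matrix (Fin n) (Fin n) ℂ) → Set ℝ := fun H =>
    {y | ∃ X ∈ S, X ≠ 0 ∧ y = frobSq (fun i => H i * X i) / c} with hinS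
  set outS : Set ℝ := {r | ∃ H : Fin k → Matrix (Fin n) (Fin n) ℂ,
    (∀ i, IsUnit (H i)) ∧ (∏ i, (H i).det) = 1 ∧ r = sInf (inS H)} with houtS
  have hred : reducedHermite B = sInf outS := rfl
  have hin_nonneg : ∀ H, ∀ y ∈ inS H, 0 ≤ y := by
    rintro H y ⟨X, hXS, hXne, rfl⟩
    exact div_nonneg (frobSq_nonneg _) hc0
  have hin_ne : ∀ H, (inS H).Nonempty := fun H => ⟨_, X₁, hX₁S, hX₁ne, rfl⟩
  have hin_bdd : ∀ H, BddBelow (inS H) := fun H => ⟨0, fun y hy => hin_nonneg H y hy⟩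
  have hinf_nonneg : ∀ H, 0 ≤ sInf (inS H) := fun H => Real.sInf_nonneg (hin_nonneg H)
  have hout_ne : outS.Nonempty :=
    ⟨_, (fun _ => (1 : Matrix (Fin n) (Fin n) ℂ)), fun _ => isUnit_one, by simp, rfl⟩
  have hout_bdd : BddBelow outS := ⟨0, by rintro r ⟨H, -, -, rfl⟩; exact hinf_nonneg H⟩
  have hout_nonneg : 0 ≤ sInf outS :=
    Real.sInf_nonneg (by rintro r ⟨H, -, -, rfl⟩; exact hinf_nonneg H)
  set T : Set ℝ := {r | ∃ X ∈ S, X ≠ 0 ∧ r = pdetAbs X} with hTdef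
  have hdm : detMin B = sInf T := rfl
  have hT_ne : T.Nonempty := ⟨_, X₁, hX₁S, hX₁ne, rfl⟩
  have hT_bdd : BddBelow T := ⟨0, by rintro r ⟨X, -, -, rfl⟩; exact pdetAbs_nonneg X⟩
  -- general upper bound via a lattice point with nonzero product determinant
  have upper : ∀ X₀, X₀ ∈ S → X₀ ≠ 0 → pdetAbs X₀ ≠ 0 →
      sInf outS ≤ (n : ℝ) * k * pdetAbs X₀ ^ ((2 : ℝ) / (n * k)) / c := by
    intro X₀ hX₀S hX₀ne ht0
    have hprod : (∏ i, (X₀ i).det) ≠ 0 := by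
      intro h
      apply ht0
      unfold pdetAbs
      rw [h, norm_zero]
    have hdet : ∀ i, (X₀ i).det ≠ 0 := fun i h =>
      hprod (Finset.prod_eq_zero (Finset.mem_univ i) h)
    obtain ⟨c₀, hc₀⟩ := IsAlgClosed.exists_pow_nat_eq (∏ i, (X₀ i).det)
      (show 0 < n * k from Nat.mul_pos hn hk)
    have hc₀ne : c₀ ≠ 0 := by
      intro h
      rw [h, zero_pow (Nat.mul_pos hn hk).ne'] at hc₀
      exact hprod hc₀.symm
    set H : Fin k → Matrix (Fin n) (Fin n) ℂ := fun i => c₀ • (X₀ i)⁻¹ with hHdef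
    have hHdet : ∀ i, (H i).det = c₀ ^ n * ((X₀ i).det)⁻¹ := by
      intro i
      show (c₀ • (X₀ i)⁻¹).det = _
      rw [Matrix.det_smul, Matrix.det_nonsing_inv, Fintype.card_fin, Ring.inverse_eq_inv']
    have hunits : ∀ i, IsUnit (H i) := fun i => (Matrix.isUnit_iff_isUnit_det _).mpr
      (isUnit_iff_ne_zero.mpr (by
        rw [hHdet i]
        exact mul_ne_zero (pow_ne_zero _ hc₀ne) (inv_ne_zero (hdet i))))
    have hprod1 : (∏ i, (H i).det) = 1 := by
      have h1 : (∏ i, (H i).det) = c₀ ^ (n * k) * (∏ i, (X₀ i).det)⁻¹ := by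
        rw [Finset.prod_congr rfl fun i _ => hHdet i, Finset.prod_mul_distrib,
          Finset.prod_const, Finset.card_univ, Fintype.card_fin, ← pow_mul,
          ← Finset.prod_inv_distrib]
      rw [h1, hc₀, mul_inv_cancel₀ hprod]
    have hHX : (fun i => H i * X₀ i) = fun _ : Fin k => c₀ • (1 : Matrix (Fin n) (Fin n) ℂ) := by
      funext i
      show (c₀ • (X₀ i)⁻¹) * X₀ i = _
      rw [Matrix.smul_mul, Matrix.nonsing_inv_mul _ (isUnit_iff_ne_zero.mpr (hdet i))]
    have habs : ‖c₀‖ ^ 2 = pdetAbs X₀ ^ ((2 : ℝ) / (n * k)) := by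
      have h1 : pdetAbs X₀ = ‖c₀‖ ^ (n * k) := by
        unfold pdetAbs
        rw [← hc₀, norm_pow]
      rw [h1, ← Real.rpow_natCast (‖c₀‖) (n * k),
        ← Real.rpow_mul (norm_nonneg _),
        show ((n * k : ℕ) : ℝ) * ((2 : ℝ) / (n * k)) = 2 by push_cast; field_simp,
        ← Real.rpow_natCast (‖c₀‖) 2]
      norm_num
    have hel : frobSq (fun i => H i * X₀ i) / c
        = (n : ℝ) * k * pdetAbs X₀ ^ ((2 : ℝ) / (n * k)) / c := by
      rw [hHX, frobSq_smul_one, habs]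
    have h1 : sInf (inS H) ≤ (n : ℝ) * k * pdetAbs X₀ ^ ((2 : ℝ) / (n * k)) / c :=
      csInf_le (hin_bdd H) ⟨X₀, hX₀S, hX₀ne, hel.symm⟩
    have h2 : sInf outS ≤ sInf (inS H) := csInf_le hout_bdd ⟨H, hunits, hprod1, rfl⟩
    exact h2.trans h1
  -- degenerate case tool
  have degen : (∃ X ∈ S, X ≠ 0 ∧ pdetAbs X = 0) → sInf outS = 0 := by
    rintro ⟨X, hXS, hXne, hX0⟩
    refine le_antisymm ?_ hout_nonneg
    refine _root_.le_of_forall_pos_le_add fun ε hε => ?_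
    rw [zero_add]
    have hpz : (∏ i, (X i).det) = 0 := by
      have h : ‖∏ i, (X i).det‖ = 0 := hX0
      exact norm_eq_zero.mp h
    obtain ⟨i₀, -, hdet0⟩ := Finset.prod_eq_zero_iff.mp hpz
    set q : ℝ := frobSq X / c with hq
    have hq0 : 0 ≤ q := div_nonneg (frobSq_nonneg _) hc0
    set s : ℝ := Real.sqrt (ε / (q + 1)) with hsdef
    have hspos : 0 < s := Real.sqrt_pos.mpr (by positivity)
    have hs2 : s ^ 2 = ε / (q + 1) := Real.sq_sqrt (by positivity)
    have hsc : ((s : ℝ) : ℂ) ≠ 0 := by exact_mod_cast hspos.ne'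
    have hdne : ((((s : ℝ) : ℂ)) ^ (n * (k - 1)))⁻¹ ≠ 0 := inv_ne_zero (pow_ne_zero _ hsc)
    obtain ⟨A, hAu, hAdet, hAX⟩ := exists_shrink hdet0 hsc hdne
    set H : Fin k → Matrix (Fin n) (Fin n) ℂ :=
      fun j => if j = i₀ then A else ((s : ℝ) : ℂ) • 1 with hH
    have hHi₀ : H i₀ = A := by rw [hH]; simp
    have hHj : ∀ j ∈ Finset.univ.erase i₀, (H j).det = (((s : ℝ) : ℂ)) ^ n := by
      intro j hj
      rw [hH]
      simp only [Finset.mem_erase] at hj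
      show (if j = i₀ then A else ((s : ℝ) : ℂ) • 1).det = _
      rw [if_neg hj.1, Matrix.det_smul, Matrix.det_one, Fintype.card_fin, mul_one]
    have hunits : ∀ j, IsUnit (H j) := by
      intro j
      show IsUnit (if j = i₀ then A else ((s : ℝ) : ℂ) • 1)
      split_ifs with h
      · exact hAu
      · refine (Matrix.isUnit_iff_isUnit_det _).mpr (isUnit_iff_ne_zero.mpr ?_)
        rw [Matrix.det_smul, Matrix.det_one, Fintype.card_fin, mul_one]
        exact pow_ne_zero _ hsc
    have hHdet1 : (∏ j, (H j).det) = 1 := by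
      rw [← Finset.mul_prod_erase _ _ (Finset.mem_univ i₀), hHi₀, hAdet,
        Finset.prod_congr rfl hHj, Finset.prod_const,
        Finset.card_erase_of_mem (Finset.mem_univ i₀), Finset.card_univ, Fintype.card_fin,
        ← pow_mul, inv_mul_cancel₀ (pow_ne_zero _ hsc)]
    have hHX : (fun j => H j * X j) = fun j => ((s : ℝ) : ℂ) • X j := by
      funext j
      show (if j = i₀ then A else ((s : ℝ) : ℂ) • 1) * X j = _
      split_ifs with h
      · subst h; exact hAX
      · rw [Matrix.smul_mul, one_mul]
    have hval : frobSq (fun j => H j * X j) / c = s ^ 2 * q := by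
      rw [hHX, frobSq_smul, Complex.norm_real, Real.norm_eq_abs, abs_of_pos hspos, mul_div_assoc, ← hq]
    have hlt : s ^ 2 * q < ε := by
      rw [hs2, div_mul_eq_mul_div, div_lt_iff₀ (by positivity)]
      nlinarith
    calc sInf outS ≤ sInf (inS H) := csInf_le hout_bdd ⟨H, hunits, hHdet1, rfl⟩
      _ ≤ s ^ 2 * q := csInf_le (hin_bdd H) ⟨X, hXS, hXne, hval.symm⟩
      _ ≤ ε := hlt.le
  constructor
  · -- main branch
    intro hD
    rw [hdm] at hD
    have hDt : ∀ t ∈ T, sInf T ≤ t := fun t ht => csInf_le hT_bdd ht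
    by_cases hcz : c = 0
    · have hiz : ∀ H, sInf (inS H) = 0 := by
        intro H
        refine le_antisymm (csInf_le (hin_bdd H) ⟨X₁, hX₁S, hX₁ne, by rw [hcz, div_zero]⟩)
          (hinf_nonneg H)
      have hout0 : sInf outS = 0 := le_antisymm
        (csInf_le hout_bdd ⟨(fun _ => (1 : Matrix (Fin n) (Fin n) ℂ)), fun _ => isUnit_one,
          by simp, (hiz _).symm⟩) hout_nonneg
      rw [hred, hout0]
      have hV : latticeVol B = 0 := by
        have h : latticeVol B ^ ((1 : ℝ) / (n ^ 2 * k)) = 0 := by rw [← hc]; exact hcz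
        exact ((Real.rpow_eq_zero_iff_of_nonneg hV0).mp h).1
      have hnmd : normMinDet B = 0 := by
        unfold normMinDet
        rw [hV, Real.zero_rpow (one_div_ne_zero (ne_of_gt (mul_pos two_pos hnR))), div_zero]
      rw [hnmd, Real.zero_rpow he2, mul_zero]
    · have hcpos : 0 < c := lt_of_le_of_ne hc0 (Ne.symm hcz)
      have hlow : ∀ r ∈ outS, (n : ℝ) * k * sInf T ^ ((2 : ℝ) / (n * k)) / c ≤ r := by
        rintro r ⟨H, hHu, hH1, rfl⟩
        refine le_csInf (hin_ne H) ?_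
        rintro y ⟨X, hXS, hXne, rfl⟩
        have hXT : pdetAbs X ∈ T := ⟨X, hXS, hXne, rfl⟩
        have h1 : (n : ℝ) * k * pdetAbs X ^ ((2 : ℝ) / (n * k)) ≤ frobSq (fun i => H i * X i) := by
          have h := frobSq_lower hn hk (fun i => H i * X i)
          rwa [pdetAbs_inv H X hH1] at h
        have h2 : sInf T ^ ((2 : ℝ) / (n * k)) ≤ pdetAbs X ^ ((2 : ℝ) / (n * k)) :=
          Real.rpow_le_rpow hD.le (hDt _ hXT) he2pos.le
        calc (n : ℝ) * k * sInf T ^ ((2 : ℝ) / (n * k)) / c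
            ≤ (n : ℝ) * k * pdetAbs X ^ ((2 : ℝ) / (n * k)) / c := by gcongr
          _ ≤ frobSq (fun i => H i * X i) / c := by gcongr
      have hge : (n : ℝ) * k * sInf T ^ ((2 : ℝ) / (n * k)) / c ≤ sInf outS :=
        le_csInf hout_ne hlow
      have hle : sInf outS ≤ (n : ℝ) * k * sInf T ^ ((2 : ℝ) / (n * k)) / c := by
        refine _root_.le_of_forall_pos_le_add fun ε hε => ?_
        have hg : ContinuousAt (fun t : ℝ => (n : ℝ) * k * t ^ ((2 : ℝ) / (n * k)) / c) (sInf T) := by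
          have h1 := Real.continuousAt_rpow_const (sInf T) ((2 : ℝ) / (n * k)) (Or.inl hD.ne')
          exact (h1.const_mul _).div_const _
        obtain ⟨δ, hδpos, hδ⟩ := Metric.continuousAt_iff.mp hg ε hε
        obtain ⟨t, htT, htlt⟩ := Real.lt_sInf_add_pos hT_ne hδpos
        have ht1 : sInf T ≤ t := hDt t htT
        have htpos : 0 < t := lt_of_lt_of_le hD ht1
        obtain ⟨X₀, hX₀S, hX₀ne, hX₀t⟩ := htT
        have hup := upper X₀ hX₀S hX₀ne (by rw [← hX₀t]; exact htpos.ne')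
        rw [← hX₀t] at hup
        have hdist : dist t (sInf T) < δ := by
          rw [Real.dist_eq, abs_of_nonneg (by linarith)]
          linarith
        have hcont := hδ hdist
        rw [Real.dist_eq] at hcont
        have habs2 := (abs_lt.mp hcont).2
        linarith
      rw [hred, le_antisymm hle hge]
      unfold normMinDet
      rw [hdm]
      rw [Real.div_rpow hD.le (Real.rpow_nonneg hV0 _), ← Real.rpow_mul hV0,
        show (1 : ℝ) / (2 * (n : ℝ)) * ((2 : ℝ) / ((n : ℝ) * k)) = (1 : ℝ) / ((n : ℝ) ^ 2 * k) by
          field_simp,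
        ← hc, mul_div_assoc]
  · rintro ⟨X, hXS, hXne, hX0⟩
    have h1 : sInf outS = 0 := degen ⟨X, hXS, hXne, hX0⟩
    refine ⟨by rw [hred, h1], ?_⟩
    have hdm0 : detMin B = 0 := by
      rw [hdm]
      refine le_antisymm (csInf_le hT_bdd ⟨X, hXS, hXne, hX0.symm⟩) (Real.sInf_nonneg ?_)
      rintro r ⟨Y, -, -, rfl⟩
      exact pdetAbs_nonneg Y
    unfold normMinDet
    rw [hdm0, zero_div, Real.zero_rpow he2, mul_zero]
end
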